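/- arXiv:0705.2576 — 2 statements merged into one kernel-verified Lean document; each statement's English description precedes it below -/
import Mathlib

section
/- Let t: Dom(t) ⊆ E → F be a densely defined A-linear operator between Hilbert A-modules. If the graph G(t) = {(x, tx) : x ∈ Dom(t)} is orthogonally complemented in E ⊕ F and the range of P_F ∘ P_{G(t)^⊥} is dense in its biorthogonal complement, then t is adjointable with densely defined adjoint t*, t is closed, and 1 + t*t is surjective. -/
/- Framework: Hilbert C*-modules over a C*-algebra `A` (via Mathlib's `CStarModule`),
densely defined operators as `LinearPMap`s, `A`-valued orthogonality, adjoints,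
regularity, graphs inside `E ⊕ F`. -/

open scoped InnerProductSpace RightActions WithCStarModule

namespace RegularOperators

variable (A : Type*) [NonUnitalCStarAlgebra A] [PartialOrder A] [StarOrderedRing A]

section Defs

variable {E F : Type*}
  [NormedAddCommGroup E] [Module ℂ E] [SMul Aᵐᵒᵖ E] [CStarModule Aᵐᵒᵖ E]
  [NormedAddCommGroup F] [Module ℂ F] [SMul Aᵐᵒᵖ F] [CStarModule Aᵐᵒᵖ F]

/-- Orthogonal complement of a subset w.r.t. the `A`-valued inner product. -/
def ortho (S : Set E) : Set E := {y | ∀ u ∈ S, ⟪u, y⟫_(Aᵐᵒᵖ) = 0}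

/-- `S` is orthogonally complemented (an orthogonal summand): every element of `E`
decomposes as a sum of an element of `S` and an element of `S^⊥`. -/
def OrthoComplemented (S : Set E) : Prop := ∀ z : E, ∃ u ∈ S, ∃ v ∈ ortho A S, z = u + v

/-- A partially defined operator is `A`-linear (for the right `A`-module action). -/
def AModuleMap (t : E →ₗ.[ℂ] F) : Prop :=
  ∀ (a : A) (x : t.domain), ∃ hx : (x : E) <• a ∈ t.domain, t ⟨(x : E) <• a, hx⟩ = (t x) <• a

/-- Kernel of a partially defined operator, as a subset of `E`. -/
def kerSet (t : E →ₗ.[ℂ] F) : Set E := {x | ∃ hx : x ∈ t.domain, t ⟨x, hx⟩ = 0}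

/-- Range of a partially defined operator. -/
def ranSet (t : E →ₗ.[ℂ] F) : Set F := {y | ∃ x : t.domain, t x = y}

/-- Domain of the adjoint: those `y` for which some `z` satisfies `⟪tx, y⟫ = ⟪x, z⟫`
for all `x` in the domain of `t`. -/
def adjDomain (t : E →ₗ.[ℂ] F) : Set F :=
  {y | ∃ z : E, ∀ x : t.domain, ⟪t x, y⟫_(Aᵐᵒᵖ) = ⟪(x : E), z⟫_(Aᵐᵒᵖ)}

/-- `s` is the adjoint operator `t*` of `t`. -/
structure IsAdjoint (t : E →ₗ.[ℂ] F) (s : F →ₗ.[ℂ] E) : Prop where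
  dom : (s.domain : Set F) = adjDomain A t
  inner_eq : ∀ (x : t.domain) (y : s.domain), ⟪t x, (y : F)⟫_(Aᵐᵒᵖ) = ⟪(x : E), s y⟫_(Aᵐᵒᵖ)

/-- The range of `1 + t*t` (where `s` plays the role of `t*`). -/
def onePlusRange (t : E →ₗ.[ℂ] F) (s : F →ₗ.[ℂ] E) : Set E :=
  {u | ∃ (x : t.domain) (h : t x ∈ s.domain), (x : E) + s ⟨t x, h⟩ = u}

/-- `t` is a regular operator with adjoint `s`: it is `A`-linear, densely defined,
closed, adjointable with densely defined adjoint, and `1 + t*t` has dense range. -/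
structure IsRegular (t : E →ₗ.[ℂ] F) (s : F →ₗ.[ℂ] E) : Prop where
  amod : AModuleMap A t
  denseDom : Dense (t.domain : Set E)
  closedGraph : IsClosed (t.graph : Set (E × F))
  adj : IsAdjoint A t s
  denseAdjDom : Dense (s.domain : Set F)
  denseOnePlusRange : Dense (onePlusRange t s)

/-- The graph of `t` inside the Hilbert `A`-module `E ⊕ F`. -/
def graphSet (t : E →ₗ.[ℂ] F) : Set (C⋆ᵐᵒᵈ(Aᵐᵒᵖ, E × F)) :=
  {w | ∃ x : t.domain, WithCStarModule.equiv Aᵐᵒᵖ (E × F) w = ((x : E), t x)}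

/-- The range of `P_F ∘ P_{G(t)^⊥}`, i.e. the image of `G(t)^⊥ ⊆ E ⊕ F` under the
canonical projection onto `F`. -/
def pfRange (t : E →ₗ.[ℂ] F) : Set F :=
  {y | ∃ w ∈ ortho A (graphSet A t), (WithCStarModule.equiv Aᵐᵒᵖ (E × F) w).2 = y}

end Defs

end RegularOperators

open RegularOperators
variable {A : Type*} [NonUnitalCStarAlgebra A] [PartialOrder A] [StarOrderedRing A]
variable {E F : Type*}
  [NormedAddCommGroup E] [Module ℂ E] [SMul Aᵐᵒᵖ E] [CStarModule Aᵐᵒᵖ E] [CompleteSpace E]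
  [NormedAddCommGroup F] [Module ℂ F] [SMul Aᵐᵒᵖ F] [CStarModule Aᵐᵒᵖ F] [CompleteSpace F]

section Aux

/-- The `A`-valued inner product is continuous in the first variable. -/
lemma auxInnerContinuous (z : E) : Continuous fun x : E => ⟪x, z⟫_(Aᵐᵒᵖ) := by
  refine (LipschitzWith.of_dist_le_mul (K := ‖z‖₊) fun x y => ?_).continuous
  simp only [dist_eq_norm]
  calc ‖⟪x, z⟫_(Aᵐᵒᵖ) - ⟪y, z⟫_(Aᵐᵒᵖ)‖ = ‖⟪x - y, z⟫_(Aᵐᵒᵖ)‖ := by rw [CStarModule.inner_sub_left]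
    _ ≤ ‖x - y‖ * ‖z‖ := CStarModule.norm_inner_le E
    _ = ‖z‖ * ‖x - y‖ := mul_comm _ _

lemma auxEqZero {D : Set E} (hD : Dense D) {z : E}
    (h : ∀ x ∈ D, ⟪x, z⟫_(Aᵐᵒᵖ) = 0) : z = 0 := by
  have hfun : (fun x : E => ⟪x, z⟫_(Aᵐᵒᵖ)) = fun _ => (0 : Aᵐᵒᵖ) :=
    (auxInnerContinuous z).ext_on hD continuous_const h
  exact CStarModule.inner_self.mp (congrFun hfun z)

lemma auxExt {D : Set E} (hD : Dense D) {z w : E}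
    (h : ∀ x ∈ D, ⟪x, z⟫_(Aᵐᵒᵖ) = ⟪x, w⟫_(Aᵐᵒᵖ)) : z = w := by
  have : z - w = 0 := auxEqZero (A := A) hD (fun x hx => by
    rw [CStarModule.inner_sub_right, h x hx, sub_self])
  exact sub_eq_zero.mp this

lemma auxExt' {t : E →ₗ.[ℂ] F} (hdense : Dense (t.domain : Set E)) {z w : E}
    (h : ∀ x : t.domain, ⟪(x : E), z⟫_(Aᵐᵒᵖ) = ⟪(x : E), w⟫_(Aᵐᵒᵖ)) : z = w :=
  auxExt hdense fun x hx => h ⟨x, hx⟩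

/-- The domain of the adjoint, as a `ℂ`-submodule. -/
def auxAdjSubmodule (t : E →ₗ.[ℂ] F) : Submodule ℂ F where
  carrier := adjDomain A t
  zero_mem' := ⟨0, fun x => by simp⟩
  add_mem' := by
    rintro y₁ y₂ ⟨z₁, h₁⟩ ⟨z₂, h₂⟩
    exact ⟨z₁ + z₂, fun x => by simp [h₁ x, h₂ x]⟩
  smul_mem' := by
    rintro c y ⟨z, h⟩
    exact ⟨c • z, fun x => by simp [h x]⟩

lemma mem_auxAdjSubmodule {t : E →ₗ.[ℂ] F} {y : F} :
    y ∈ auxAdjSubmodule (A := A) t ↔ y ∈ adjDomain A t := Iff.rfl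

/-- The adjoint of `t` as a partially defined linear map. -/
noncomputable def auxAdjPMap (t : E →ₗ.[ℂ] F) (hdense : Dense (t.domain : Set E)) :
    F →ₗ.[ℂ] E where
  domain := auxAdjSubmodule (A := A) t
  toFun :=
    { toFun := fun y => (mem_auxAdjSubmodule.mp y.property).choose
      map_add' := fun y₁ y₂ => by
        refine auxExt' (A := A) hdense fun x => ?_
        have hy := (mem_auxAdjSubmodule.mp (y₁ + y₂).property).choose_spec x
        have hy₁ := (mem_auxAdjSubmodule.mp y₁.property).choose_spec x
        have hy₂ := (mem_auxAdjSubmodule.mp y₂.property).choose_spec x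
        rw [CStarModule.inner_add_right, ← hy, ← hy₁, ← hy₂, Submodule.coe_add,
          CStarModule.inner_add_right]
      map_smul' := fun c y => by
        refine auxExt' (A := A) hdense fun x => ?_
        have hy := (mem_auxAdjSubmodule.mp (c • y).property).choose_spec x
        have hy' := (mem_auxAdjSubmodule.mp y.property).choose_spec x
        rw [RingHom.id_apply, CStarModule.inner_smul_right_complex, ← hy', ← hy,
          Submodule.coe_smul, CStarModule.inner_smul_right_complex] }

lemma auxAdjPMap_spec (t : E →ₗ.[ℂ] F) (hdense : Dense (t.domain : Set E))
    (x : t.domain) (y : (auxAdjPMap (A := A) t hdense).domain) :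
    ⟪t x, (y : F)⟫_(Aᵐᵒᵖ) = ⟪(x : E), auxAdjPMap (A := A) t hdense y⟫_(Aᵐᵒᵖ) :=
  (mem_auxAdjSubmodule.mp y.property).choose_spec x

end Aux

/-- if the graph of a densely defined `A`-linear operator `t` is
orthogonally complemented in `E ⊕ F` and the range of `P_F ∘ P_{G(t)^⊥}` is dense in
its biorthogonal complement, then `t` is adjointable with densely defined adjoint,
`t` is closed, and `1 + t*t` is surjective. -/
theorem adjointable_of_graph_orthoComplemented (t : E →ₗ.[ℂ] F)
    (hmod : AModuleMap A t) (hdense : Dense (t.domain : Set E))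
    (hgraph : OrthoComplemented A (graphSet A t))
    (hbi : closure (pfRange A t) = ortho A (ortho A (pfRange A t))) :
    ∃ s : F →ₗ.[ℂ] E, IsAdjoint A t s ∧ Dense (s.domain : Set F) ∧
      IsClosed (t.graph : Set (E × F)) ∧
      ∀ u : E, ∃ (x : t.domain) (h : t x ∈ s.domain), (x : E) + s ⟨t x, h⟩ = u := by
  classical
  set s : F →ₗ.[ℂ] E := auxAdjPMap (A := A) t hdense with hs
  have sdom : ∀ {y : F}, y ∈ s.domain ↔ y ∈ adjDomain A t := Iff.rfl
  have sspec : ∀ (x : t.domain) (y : s.domain), ⟪t x, (y : F)⟫_(Aᵐᵒᵖ) = ⟪(x : E), s y⟫_(Aᵐᵒᵖ) :=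
    auxAdjPMap_spec t hdense
  -- characterization of the orthogonal complement of the graph
  have horthochar : ∀ w : C⋆ᵐᵒᵈ(Aᵐᵒᵖ, E × F), w ∈ ortho A (graphSet A t) ↔
      ∀ x : t.domain, ⟪(x : E), w.1⟫_(Aᵐᵒᵖ) + ⟪t x, w.2⟫_(Aᵐᵒᵖ) = 0 := by
    intro w
    constructor
    · intro hw x
      have hmem : ((WithCStarModule.equiv Aᵐᵒᵖ (E × F)).symm ((x : E), t x)) ∈ graphSet A t :=
        ⟨x, by simp⟩
      have h0 := hw _ hmem
      rw [WithCStarModule.prod_inner] at h0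
      simpa using h0
    · rintro h u ⟨x, hx⟩
      rw [WithCStarModule.prod_inner]
      have h1 : u.1 = (x : E) := by rw [← WithCStarModule.equiv_fst u, hx]
      have h2 : u.2 = t x := by rw [← WithCStarModule.equiv_snd u, hx]
      rw [h1, h2]
      exact h x
  -- elements of the orthogonal complement of the graph have the form (-s y, y)
  have hkey : ∀ w : C⋆ᵐᵒᵈ(Aᵐᵒᵖ, E × F), w ∈ ortho A (graphSet A t) →
      ∃ h2 : w.2 ∈ s.domain, s ⟨w.2, h2⟩ = -w.1 := by
    intro w hw
    have hmem : w.2 ∈ adjDomain A t := by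
      refine ⟨-w.1, fun x => ?_⟩
      have h0 := (horthochar w).mp hw x
      rw [CStarModule.inner_neg_right]
      exact eq_neg_of_add_eq_zero_right h0
    refine ⟨sdom.mpr hmem, ?_⟩
    refine auxExt' (A := A) hdense fun x => ?_
    rw [← sspec x ⟨w.2, sdom.mpr hmem⟩, CStarModule.inner_neg_right]
    exact eq_neg_of_add_eq_zero_right ((horthochar w).mp hw x)
  -- conversely, every element of the domain of `s` gives such an element
  have hkey' : ∀ y : s.domain,
      ((WithCStarModule.equiv Aᵐᵒᵖ (E × F)).symm (-(s y), (y : F))) ∈ ortho A (graphSet A t) := by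
    intro y
    rw [horthochar]
    intro x
    simp only [WithCStarModule.equiv_symm_fst, WithCStarModule.equiv_symm_snd]
    rw [CStarModule.inner_neg_right, ← sspec x y, neg_add_cancel]
  -- the graph is closed in `C⋆ᵐᵒᵈ(Aᵐᵒᵖ, E × F)`
  have hclosedG : IsClosed (graphSet A t) := by
    refine isClosed_of_closure_subset fun z hz => ?_
    obtain ⟨u, hu, v, hv, hzuv⟩ := hgraph z
    have hzv : ⟪z, v⟫_(Aᵐᵒᵖ) = 0 := by
      have hmt : Set.MapsTo (fun x : C⋆ᵐᵒᵈ(Aᵐᵒᵖ, E × F) => ⟪x, v⟫_(Aᵐᵒᵖ)) (graphSet A t) {0} :=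
        fun g hg => hv g hg
      have := hmt.closure (auxInnerContinuous v) hz
      simpa using this
    have hvv : v = 0 := by
      have hveq : v = z - u := eq_sub_of_add_eq' hzuv.symm
      have : ⟪v, v⟫_(Aᵐᵒᵖ) = 0 := by
        nth_rewrite 2 [hveq]
        rw [CStarModule.inner_sub_right, ← CStarModule.star_inner z,
          ← CStarModule.star_inner u, hzv, hv u hu, star_zero, sub_zero]
      exact CStarModule.inner_self.mp this
    rw [hzuv, hvv, add_zero]
    exact hu
  -- transfer closedness to `E × F`
  have hclosed : IsClosed (t.graph : Set (E × F)) := by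
    have hpre : (t.graph : Set (E × F)) =
        (WithCStarModule.uniformEquiv (A := Aᵐᵒᵖ) (E := E × F)).symm ⁻¹' graphSet A t := by
      ext p
      simp only [Set.mem_preimage, SetLike.mem_coe, LinearPMap.mem_graph_iff]
      constructor
      · rintro ⟨x, hx1, hx2⟩
        exact ⟨x, show p = ((x : E), t x) from (Prod.ext_iff.mpr ⟨hx1.symm, hx2.symm⟩)⟩
      · rintro ⟨x, hx⟩
        have hpeq : p = ((x : E), t x) := hx
        exact ⟨x, (congrArg Prod.fst hpeq).symm, (congrArg Prod.snd hpeq).symm⟩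
    rw [hpre]
    exact hclosedG.preimage (WithCStarModule.uniformEquiv (A := Aᵐᵒᵖ) (E := E × F)).symm.continuous
  -- `pfRange` coincides with the domain of the adjoint
  have hpf : pfRange A t = adjDomain A t := by
    ext y
    constructor
    · rintro ⟨w, hw, hwy⟩
      obtain ⟨h2, -⟩ := hkey w hw
      rw [WithCStarModule.equiv_snd] at hwy
      rw [← hwy]
      exact sdom.mp h2
    · intro hy
      refine ⟨(WithCStarModule.equiv Aᵐᵒᵖ (E × F)).symm (-(s ⟨y, sdom.mpr hy⟩), y),
        hkey' ⟨y, sdom.mpr hy⟩, by simp⟩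
  -- the orthogonal complement of `adjDomain` is trivial
  have horthoadj : ortho A (adjDomain A t) = ({0} : Set F) := by
    ext y
    simp only [Set.mem_singleton_iff]
    constructor
    · intro hy
      set w : C⋆ᵐᵒᵈ(Aᵐᵒᵖ, E × F) := (WithCStarModule.equiv Aᵐᵒᵖ (E × F)).symm (0, y) with hw
      have hworth : ∀ v ∈ ortho A (graphSet A t), ⟪v, w⟫_(Aᵐᵒᵖ) = 0 := by
        intro v hv
        obtain ⟨h2, -⟩ := hkey v hv
        rw [WithCStarModule.prod_inner]
        have : w.1 = (0 : E) := WithCStarModule.equiv_symm_fst _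
        rw [this]
        have : w.2 = y := WithCStarModule.equiv_symm_snd _
        rw [this, CStarModule.inner_zero_right, zero_add]
        exact hy v.2 (sdom.mp h2)
      obtain ⟨u, hu, v₀, hv₀, hwd⟩ := hgraph w
      have hv₀0 : v₀ = 0 := by
        have hveq : v₀ = w - u := eq_sub_of_add_eq' hwd.symm
        have : ⟪v₀, v₀⟫_(Aᵐᵒᵖ) = 0 := by
          nth_rewrite 2 [hveq]
          rw [CStarModule.inner_sub_right, hworth v₀ hv₀, ← CStarModule.star_inner u,
            hv₀ u hu, star_zero, sub_zero]
        exact CStarModule.inner_self.mp this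
      have hwu : w = u := by rw [hwd, hv₀0, add_zero]
      obtain ⟨x, hx⟩ := hu
      rw [← hwu] at hx
      have hx' : ((0 : E), y) = ((x : E), t x) := by simpa [hw] using hx
      have hx0 : (x : E) = 0 := (Prod.ext_iff.mp hx').1.symm
      have : x = 0 := Subtype.ext hx0
      rw [this] at hx'
      have := (Prod.ext_iff.mp hx').2
      simpa using this
    · rintro rfl
      intro u hu
      exact CStarModule.inner_zero_right
  -- density of the domain of the adjoint
  have hdenseS : Dense (s.domain : Set F) := by
    have hset : (s.domain : Set F) = pfRange A t := by rw [hpf]; rfl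
    rw [hset, dense_iff_closure_eq, hbi, hpf, horthoadj]
    ext y
    simp only [Set.mem_univ, iff_true, ortho, Set.mem_setOf_eq]
    rintro u rfl
    exact CStarModule.inner_zero_left
  -- surjectivity of 1 + t* t
  refine ⟨s, ⟨rfl, sspec⟩, hdenseS, hclosed, fun u => ?_⟩
  obtain ⟨g, hg, v, hv, huv⟩ := hgraph ((WithCStarModule.equiv Aᵐᵒᵖ (E × F)).symm (u, 0))
  obtain ⟨x, hx⟩ := hg
  obtain ⟨h2, hsv⟩ := hkey v hv
  have heq : (u, (0 : F)) = ((x : E) + v.1, t x + v.2) := by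
    have := congrArg (WithCStarModule.equiv Aᵐᵒᵖ (E × F)) huv
    rw [Equiv.apply_symm_apply, WithCStarModule.equiv_add, hx] at this
    rw [this]
    rfl
  have h1 : u = (x : E) + v.1 := (Prod.ext_iff.mp heq).1
  have h2' : (0 : F) = t x + v.2 := (Prod.ext_iff.mp heq).2
  have hv2 : v.2 = -(t x) := by rw [eq_neg_iff_add_eq_zero, add_comm]; exact h2'.symm
  have htx : t x ∈ s.domain := by
    have : -v.2 ∈ s.domain := neg_mem h2
    rwa [hv2, neg_neg] at this
  refine ⟨x, htx, ?_⟩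
  have hsub : (⟨t x, htx⟩ : s.domain) = -(⟨v.2, h2⟩ : s.domain) := by
    apply Subtype.ext
    simp [hv2]
  rw [hsub, LinearPMap.map_neg, hsv, neg_neg, ← h1]
end

section
/- Let t ∈ R(E,F) be a regular operator such that Ker(t) is orthogonally complemented in E and t is bounded below on Ker(t)^⊥ ∩ Dom(t) by a constant c > 0. Then Ran(t) is closed in F. -/
/- Framework: Hilbert C*-modules over a C*-algebra `A` (via Mathlib's `CStarModule`),
densely defined operators as `LinearPMap`s, `A`-valued orthogonality, adjoints,
regularity, graphs inside `E ⊕ F`. -/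

open scoped InnerProductSpace RightActions WithCStarModule

open RegularOperators
variable {A : Type*} [NonUnitalCStarAlgebra A] [PartialOrder A] [StarOrderedRing A]
variable {E F : Type*}
  [NormedAddCommGroup E] [Module ℂ E] [SMul Aᵐᵒᵖ E] [CStarModule Aᵐᵒᵖ E] [CompleteSpace E]
  [NormedAddCommGroup F] [Module ℂ F] [SMul Aᵐᵒᵖ F] [CStarModule Aᵐᵒᵖ F] [CompleteSpace F]

/-- if `Ker(t)` is orthogonally complemented in `E` and the regular
operator `t` is bounded below on `Ker(t)^⊥ ∩ Dom(t)`, then `Ran(t)` is closed. -/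
theorem ranSet_isClosed_of_orthoComplemented_of_boundedBelow
    (t : E →ₗ.[ℂ] F) (s : F →ₗ.[ℂ] E) (ht : IsRegular A t s)
    (hker : OrthoComplemented A (kerSet t)) (c : ℝ) (hc : 0 < c)
    (hbdd : ∀ x : t.domain, (x : E) ∈ ortho A (kerSet t) → c * ‖(x : E)‖ ≤ ‖t x‖) :
    IsClosed (ranSet t) := by
  have hseq : IsSeqClosed (ranSet t) := by
    intro yn y hmem hlim
    choose x hx using hmem
    have hdec : ∀ n, ∃ u ∈ kerSet t, ∃ v ∈ ortho A (kerSet t), (x n : E) = u + v :=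
      fun n => hker (x n)
    choose u hu v hv hxuv using hdec
    have hudom : ∀ n, u n ∈ t.domain := fun n => (hu n).1
    have hvdom : ∀ n, v n ∈ t.domain := by
      intro n
      have hveq : v n = (x n : E) - u n := by rw [hxuv n]; abel
      rw [hveq]; exact sub_mem (x n).2 (hudom n)
    set w : ℕ → t.domain := fun n => ⟨v n, hvdom n⟩ with hw
    have htw : ∀ n, t (w n) = yn n := by
      intro n
      have h1 : x n = ⟨u n, hudom n⟩ + w n := by
        apply Subtype.ext; simp [hw, hxuv n]
      have h2 : t ⟨u n, hudom n⟩ = 0 := by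
        obtain ⟨h, h'⟩ := hu n
        exact h'
      rw [← hx n, h1, t.map_add, h2, zero_add]
    have key : ∀ m n, c * ‖v m - v n‖ ≤ ‖yn m - yn n‖ := by
      intro m n
      have hdm : v m - v n ∈ t.domain := sub_mem (hvdom m) (hvdom n)
      have hortho : v m - v n ∈ ortho A (kerSet t) := by
        intro z hz
        simp [CStarModule.inner_sub_right, hv m z hz, hv n z hz]
      have hb := hbdd ⟨v m - v n, hdm⟩ hortho
      have heq : (⟨v m - v n, hdm⟩ : t.domain) = w m - w n := by
        apply Subtype.ext; rfl
      rw [heq, t.map_sub, htw m, htw n] at hb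
      exact hb
    have hyc : CauchySeq yn := hlim.cauchySeq
    have hvc : CauchySeq v := by
      rw [Metric.cauchySeq_iff] at hyc ⊢
      intro ε hε
      obtain ⟨N, hN⟩ := hyc (c * ε) (by positivity)
      refine ⟨N, fun m hm n hn => ?_⟩
      have h1 := key m n
      have h2 := hN m hm n hn
      rw [dist_eq_norm] at h2 ⊢
      nlinarith [h1, h2]
    obtain ⟨vlim, hvlim⟩ := cauchySeq_tendsto_of_complete hvc
    have hgraph : (vlim, y) ∈ t.graph := by
      refine ht.closedGraph.mem_of_tendsto
        (f := fun n => ((v n : E), yn n)) (hvlim.prodMk_nhds hlim) ?_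
      filter_upwards with n
      have := t.mem_graph (w n)
      rwa [htw n] at this
    rw [LinearPMap.mem_graph_iff] at hgraph
    obtain ⟨z, hz1, hz2⟩ := hgraph
    exact ⟨z, hz2⟩
  exact hseq.isClosed
end
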